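/- arXiv:2006.02372 — 6 statements merged into one kernel-verified Lean document; each statement's English description precedes it below -/
import Mathlib

section
/- (Disjunctive Form Lemma) Let (A, Ω, +) be a semilattice ordered algebra generated by a subset X ⊆ A. Then every element r ∈ A can be written as r = r₁ + … + r_p for some finite number of elements r₁,…,r_p belonging to the subalgebra ⟨X⟩_Ω of the Ω-reduct (A, Ω) generated by X. -/
/-- Closure of a set under the operations `ω` only. -/
inductive OmegaCl {A : Type*} {ι : Type*} {n : ι → ℕ}
    (ω : ∀ i : ι, (Fin (n i) → A) → A) (X : Set A) : A → Prop
  | base : ∀ a ∈ X, OmegaCl ω X a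
  | op : ∀ (i : ι) (x : Fin (n i) → A),
      (∀ j, OmegaCl ω X (x j)) → OmegaCl ω X (ω i x)

/-- Closure of a set under the operations `ω` together with the join `⊔`. -/
inductive FullCl {A : Type*} [SemilatticeSup A] {ι : Type*} {n : ι → ℕ}
    (ω : ∀ i : ι, (Fin (n i) → A) → A) (X : Set A) : A → Prop
  | base : ∀ a ∈ X, FullCl ω X a
  | op : ∀ (i : ι) (x : Fin (n i) → A),
      (∀ j, FullCl ω X (x j)) → FullCl ω X (ω i x)
  | sup : ∀ a b, FullCl ω X a → FullCl ω X b → FullCl ω X (a ⊔ b)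

section Aux

variable {A : Type*} [SemilatticeSup A] {ι : Type*} {n : ι → ℕ}
  (ω : ∀ i : ι, (Fin (n i) → A) → A) (X : Set A)

/-- `a` is a finite join of elements of the Ω-closure of `X`. -/
def IsDisj (a : A) : Prop :=
  ∃ (p : ℕ) (f : Fin (p + 1) → A),
    (∀ j, OmegaCl ω X (f j)) ∧ a = Finset.univ.sup' Finset.univ_nonempty f

lemma isDisj_of_omegaCl {a : A} (h : OmegaCl ω X a) : IsDisj ω X a :=
  ⟨0, fun _ => a, fun _ => h, by simp⟩

lemma isDisj_sup {a b : A} (ha : IsDisj ω X a) (hb : IsDisj ω X b) :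
    IsDisj ω X (a ⊔ b) := by
  obtain ⟨p, f, hf, rfl⟩ := ha
  obtain ⟨q, g, hg, rfl⟩ := hb
  set F : Fin (p + q + 1 + 1) → A := fun k =>
    if h : (k : ℕ) < p + 1 then f ⟨k, h⟩ else g ⟨(k : ℕ) - (p + 1), by omega⟩ with hF
  refine ⟨p + q + 1, F, ?_, ?_⟩
  · intro k
    rw [hF]
    dsimp only
    split
    · exact hf _
    · exact hg _
  · apply le_antisymm
    · apply sup_le
      · apply Finset.sup'_le
        intro i _
        have h1 : F ⟨(i : ℕ), by omega⟩ = f i := by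
          rw [hF]; dsimp only; rw [dif_pos i.isLt]
        calc f i = F ⟨(i : ℕ), by omega⟩ := h1.symm
          _ ≤ _ := Finset.le_sup' F (Finset.mem_univ _)
      · apply Finset.sup'_le
        intro i _
        have h1 : F ⟨p + 1 + (i : ℕ), by omega⟩ = g i := by
          rw [hF]; dsimp only
          rw [dif_neg (by omega)]
          congr 1
          ext
          simp
        calc g i = F ⟨p + 1 + (i : ℕ), by omega⟩ := h1.symm
          _ ≤ _ := Finset.le_sup' F (Finset.mem_univ _)
    · apply Finset.sup'_le
      intro k _
      rw [hF]
      dsimp only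
      split
      · exact le_sup_of_le_left (Finset.le_sup' f (Finset.mem_univ _))
      · exact le_sup_of_le_right (Finset.le_sup' g (Finset.mem_univ _))

variable (hdist : ∀ (i : ι) (x : Fin (n i) → A) (j : Fin (n i)) (y : A),
      ω i (Function.update x j (x j ⊔ y)) = ω i x ⊔ ω i (Function.update x j y))

include hdist in
lemma omega_update_sup (i : ι) (x : Fin (n i) → A) (j : Fin (n i)) (a b : A) :
    ω i (Function.update x j (a ⊔ b)) =
      ω i (Function.update x j a) ⊔ ω i (Function.update x j b) := by
  have h := hdist i (Function.update x j a) j b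
  rwa [Function.update_self, Function.update_idem, Function.update_idem] at h

include hdist in
/-- one-coordinate lemma -/
lemma isDisj_op_coord (i : ι) (x : Fin (n i) → A) (j : Fin (n i))
    (hx : IsDisj ω X (x j))
    (h : ∀ c, OmegaCl ω X c → IsDisj ω X (ω i (Function.update x j c))) :
    IsDisj ω X (ω i x) := by
  obtain ⟨p, f, hf, hxj⟩ := hx
  have key : ∀ (p : ℕ) (f : Fin (p + 1) → A), (∀ k, OmegaCl ω X (f k)) →
      IsDisj ω X (ω i (Function.update x j (Finset.univ.sup' Finset.univ_nonempty f))) := by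
    intro p
    induction p with
    | zero =>
      intro f hf
      have : Finset.univ.sup' Finset.univ_nonempty f = f 0 := by simp
      rw [this]
      exact h _ (hf 0)
    | succ p ih =>
      intro f hf
      have hsplit : Finset.univ.sup' (Finset.univ_nonempty (α := Fin (p + 1 + 1))) f =
          Finset.univ.sup' (Finset.univ_nonempty (α := Fin (p + 1))) (f ∘ Fin.castSucc)
            ⊔ f (Fin.last (p + 1)) := by
        apply le_antisymm
        · apply Finset.sup'_le
          intro k _
          rcases Fin.eq_castSucc_or_eq_last k with ⟨k', rfl⟩ | rfl
          · exact le_sup_of_le_left (Finset.le_sup' (f ∘ Fin.castSucc) (Finset.mem_univ k'))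
          · exact le_sup_right
        · apply sup_le
          · exact Finset.sup'_le _ _ fun k _ => Finset.le_sup' f (Finset.mem_univ _)
          · exact Finset.le_sup' f (Finset.mem_univ _)
      rw [hsplit, omega_update_sup ω hdist]
      exact isDisj_sup ω X (ih _ fun k => hf _) (h _ (hf _))
  have := key p f hf
  rwa [← hxj, Function.update_eq_self] at this

include hdist in
lemma isDisj_op (i : ι) (x : Fin (n i) → A) (hx : ∀ j, IsDisj ω X (x j)) :
    IsDisj ω X (ω i x) := by
  classical
  have main : ∀ (S : Finset (Fin (n i))) (x : Fin (n i) → A),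
      (∀ j ∉ S, OmegaCl ω X (x j)) → (∀ j, IsDisj ω X (x j)) → IsDisj ω X (ω i x) := by
    intro S
    induction S using Finset.induction with
    | empty =>
      intro x h _
      exact isDisj_of_omegaCl ω X (OmegaCl.op i x fun j => h j (Finset.notMem_empty j))
    | insert j S hjS ih =>
      intro x h hx
      refine isDisj_op_coord ω X hdist i x j (hx j) fun c hc => ?_
      refine ih _ (fun k hk => ?_) (fun k => ?_)
      · rcases eq_or_ne k j with rfl | hne
        · rwa [Function.update_self]
        · rw [Function.update_of_ne hne]
          exact h k (by simp [hk, hne])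
      · rcases eq_or_ne k j with rfl | hne
        · rw [Function.update_self]; exact isDisj_of_omegaCl ω X hc
        · rw [Function.update_of_ne hne]; exact hx k
  exact main Finset.univ x (fun j hj => absurd (Finset.mem_univ j) hj) hx

end Aux

/-- Disjunctive Form Lemma: in a semilattice ordered algebra
generated by `X`, every element is a finite join of elements of `⟨X⟩_Ω`. -/
theorem disjunctive_form {A : Type*} [SemilatticeSup A]
    {ι : Type*} {n : ι → ℕ} (ω : ∀ i : ι, (Fin (n i) → A) → A)
    (hdist : ∀ (i : ι) (x : Fin (n i) → A) (j : Fin (n i)) (y : A),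
      ω i (Function.update x j (x j ⊔ y)) = ω i x ⊔ ω i (Function.update x j y))
    (X : Set A) (hgen : ∀ a : A, FullCl ω X a) :
    ∀ r : A, ∃ (p : ℕ) (f : Fin (p + 1) → A),
      (∀ j, OmegaCl ω X (f j)) ∧
      r = Finset.univ.sup' Finset.univ_nonempty f := by
  intro r
  have : IsDisj ω X r := by
    induction hgen r with
    | base a ha => exact isDisj_of_omegaCl ω X (OmegaCl.base a ha)
    | op i x hx ih => exact isDisj_op ω X hdist i x ih
    | sup a b ha hb iha ihb => exact isDisj_sup ω X iha ihb
  exact this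
end

section
/- Let (A, Ω, +) be a semilattice ordered algebra and t an n-ary linear Ω-term (each variable occurs at most once in t). Then the term operation t : Aⁿ → A distributes over +: for each index i, t(x₁,…,xᵢ+yᵢ,…,xₙ) = t(x₁,…,xᵢ,…,xₙ) + t(x₁,…,yᵢ,…,xₙ). -/
/-- Ω-terms of type given by arities `n : ι → ℕ` in `m` variables. -/
inductive OmegaTerm (ι : Type) (n : ι → ℕ) (m : ℕ) : Type
  | var : Fin m → OmegaTerm ι n m
  | op : ∀ i : ι, (Fin (n i) → OmegaTerm ι n m) → OmegaTerm ι n m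

/-- Number of occurrences of a variable in a term. -/
def OmegaTerm.occ {ι : Type} {n : ι → ℕ} {m : ℕ} :
    OmegaTerm ι n m → Fin m → ℕ
  | .var w, v => if w = v then 1 else 0
  | .op i f, v => ∑ k : Fin (n i), (f k).occ v

/-- Evaluation of a term in an algebra `(A, ω)`. -/
def OmegaTerm.eval {ι : Type} {n : ι → ℕ} {m : ℕ} {A : Type*}
    (ω : ∀ i : ι, (Fin (n i) → A) → A) :
    OmegaTerm ι n m → (Fin m → A) → A
  | .var w, x => x w
  | .op i f, x => ω i fun k => (f k).eval ω x

theorem OmegaTerm.eval_update_of_occ_zero {A : Type*}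
    {ι : Type} {n : ι → ℕ} (ω : ∀ i : ι, (Fin (n i) → A) → A)
    {m : ℕ} (t : OmegaTerm ι n m) (j : Fin m) (h : t.occ j = 0)
    (x : Fin m → A) (y : A) :
    t.eval ω (Function.update x j y) = t.eval ω x := by
  induction t with
  | var w =>
      simp only [OmegaTerm.occ] at h
      have hw : w ≠ j := by intro hwj; simp [hwj] at h
      simp [OmegaTerm.eval, Function.update_of_ne hw]
  | op i f ih =>
      simp only [OmegaTerm.occ, Finset.sum_eq_zero_iff, Finset.mem_univ,
        forall_true_left] at h
      simp only [OmegaTerm.eval]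
      congr 1
      funext k
      exact ih k (h k)

/-- In a semilattice ordered algebra, the term operation of any
linear term distributes over the join in each argument. -/
theorem linear_term_distributes {A : Type*} [SemilatticeSup A]
    {ι : Type} {n : ι → ℕ} (ω : ∀ i : ι, (Fin (n i) → A) → A)
    (hdist : ∀ (i : ι) (x : Fin (n i) → A) (j : Fin (n i)) (y : A),
      ω i (Function.update x j (x j ⊔ y)) = ω i x ⊔ ω i (Function.update x j y))
    {m : ℕ} (t : OmegaTerm ι n m) (hlin : ∀ v, t.occ v ≤ 1) :
    ∀ (x : Fin m → A) (j : Fin m) (y : A),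
      t.eval ω (Function.update x j (x j ⊔ y)) =
        t.eval ω x ⊔ t.eval ω (Function.update x j y) := by
  induction t with
  | var w =>
      intro x j y
      simp only [OmegaTerm.eval]
      by_cases hwj : w = j
      · subst hwj; simp
      · simp [Function.update_of_ne hwj]
  | op i f ih =>
      intro x j y
      by_cases hall : ∀ k, (f k).occ j = 0
      · have h0 : (OmegaTerm.op i f).occ j = 0 := by
          simp [OmegaTerm.occ, hall]
        rw [OmegaTerm.eval_update_of_occ_zero ω _ j h0,
            OmegaTerm.eval_update_of_occ_zero ω _ j h0, sup_idem]
      · push_neg at hall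
        obtain ⟨k₀, hk₀⟩ := hall
        have hzero : ∀ k, k ≠ k₀ → (f k).occ j = 0 := by
          intro k hk
          by_contra hne
          have h2 : 2 ≤ (OmegaTerm.op i f).occ j := by
            have hsub : ({k, k₀} : Finset (Fin (n i))) ⊆ Finset.univ :=
              Finset.subset_univ _
            have := Finset.sum_le_sum_of_subset (f := fun k => (f k).occ j) hsub
            rw [Finset.sum_pair hk] at this
            calc 2 ≤ (f k).occ j + (f k₀).occ j := by omega
              _ ≤ _ := this
          have := hlin j
          simp only [OmegaTerm.occ] at this h2 ⊢
          omega
        have hlin' : ∀ v, (f k₀).occ v ≤ 1 := by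
          intro v
          refine le_trans ?_ (hlin v)
          exact Finset.single_le_sum (f := fun k => (f k).occ v)
            (fun _ _ => Nat.zero_le _) (Finset.mem_univ k₀)
        set g : Fin (n i) → A := fun k => (f k).eval ω x with hg
        set z : A := (f k₀).eval ω (Function.update x j y) with hz
        have he1 : (fun k => (f k).eval ω (Function.update x j (x j ⊔ y)))
            = Function.update g k₀ (g k₀ ⊔ z) := by
          funext k
          by_cases hk : k = k₀
          · subst hk
            rw [Function.update_self]
            exact ih _ hlin' x j y
          · rw [Function.update_of_ne hk,
              OmegaTerm.eval_update_of_occ_zero ω _ j (hzero k hk)]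
        have he2 : (fun k => (f k).eval ω (Function.update x j y))
            = Function.update g k₀ z := by
          funext k
          by_cases hk : k = k₀
          · subst hk; rw [Function.update_self]
          · rw [Function.update_of_ne hk,
              OmegaTerm.eval_update_of_occ_zero ω _ j (hzero k hk)]
        simp only [OmegaTerm.eval]
        rw [he1, he2]
        exact hdist i g k₀ z
end

section
/- Let (A, ·, +) be a semilattice ordered algebra in which · is a semigroup operation distributing over + on both sides, generated by a set X such that the ·-subsemigroup ⟨X⟩ generated by X consists of idempotent elements (a·a = a for a ∈ ⟨X⟩). Then the identity a·a = a holds in all of A if and only if x + y = x + y + x·y + y·x holds for all x, y ∈ A. -/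
/-- Let `(A, ·, +)` be a semilattice ordered semigroup generated
by a set `X` whose generated subsemigroup `⟨X⟩` consists of idempotents (so
every element of `A` is a finite join of elements of `⟨X⟩`). Then `a·a = a`
holds in all of `A` iff `x + y = x + y + x·y + y·x` holds in `A`. -/
theorem slo_semigroup_idempotent_iff {A : Type*} [Semigroup A] [SemilatticeSup A]
    (hdistl : ∀ x y z : A, x * (y ⊔ z) = x * y ⊔ x * z)
    (hdistr : ∀ x y z : A, (x ⊔ y) * z = x * z ⊔ y * z)
    (X : Set A)
    (hidem : ∀ a ∈ Subsemigroup.closure X, a * a = a)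
    (hgen : ∀ a : A, ∃ (p : ℕ) (f : Fin (p + 1) → A),
      (∀ j, f j ∈ Subsemigroup.closure X) ∧
      a = Finset.univ.sup' Finset.univ_nonempty f) :
    (∀ a : A, a * a = a) ↔ (∀ x y : A, x ⊔ y = x ⊔ y ⊔ x * y ⊔ y * x) := by
  have key : ∀ u v : A, (u ⊔ v) * (u ⊔ v) = u * u ⊔ v * v ⊔ u * v ⊔ v * u := by
    intro u v
    rw [hdistl, hdistr, hdistr]
    ac_rfl
  constructor
  · intro h x y
    have := key x y
    rw [h x, h y, h (x ⊔ y)] at this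
    exact this
  · intro h a
    obtain ⟨p, f, hf, rfl⟩ := hgen a
    apply Finset.sup'_induction (p := fun a : A => a * a = a)
    · intro u hu v hv
      rw [key, hu, hv, ← h u v]
    · intro j _
      exact hidem _ (hf j)
end

section
/- The free algebra on the empty set in the variety of commutative doubly idempotent semirings with constants 0 and 1 (where (S,+,0) is a join-semilattice with least element 0, (S,·,1) is a meet-type semilattice with unit 1, · distributes over +, and x·0 = 0) has exactly 2 elements, and the free algebra on one generator has exactly 4 elements. -/
/-- A commutative doubly idempotent semiring with constants `0` and `1`:
`(S,·,1)` and `(S,+,0)` are commutative idempotent monoids, `·` distributes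
over `+`, and `x·0 = 0`. -/
class CDIS (S : Type) where
  mul : S → S → S
  add : S → S → S
  zero : S
  one : S
  mul_assoc : ∀ a b c, mul (mul a b) c = mul a (mul b c)
  mul_comm : ∀ a b, mul a b = mul b a
  mul_idem : ∀ a, mul a a = a
  mul_one : ∀ a, mul a one = a
  add_assoc : ∀ a b c, add (add a b) c = add a (add b c)
  add_comm : ∀ a b, add a b = add b a
  add_idem : ∀ a, add a a = a
  add_zero : ∀ a, add a zero = a
  mul_add : ∀ a b c, mul a (add b c) = add (mul a b) (mul a c)
  mul_zero : ∀ a, mul a zero = zero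

/-- Homomorphisms of commutative doubly idempotent semirings with constants. -/
def CDIS.IsHom {S T : Type} [CDIS S] [CDIS T] (f : S → T) : Prop :=
  (∀ a b, f (CDIS.mul a b) = CDIS.mul (f a) (f b)) ∧
  (∀ a b, f (CDIS.add a b) = CDIS.add (f a) (f b)) ∧
  f (CDIS.zero : S) = CDIS.zero ∧ f (CDIS.one : S) = CDIS.one

/-- `F` with insertion of generators `ι : X → F` is free in the variety of
commutative doubly idempotent semirings with constants. -/
def CDIS.IsFree (X : Type) (F : Type) [CDIS F] (ι : X → F) : Prop :=
  ∀ (T : Type) (_ : CDIS T) (g : X → T),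
    ∃! f : F → T, CDIS.IsHom f ∧ f ∘ ι = g

namespace CDISAux

open CDIS

theorem zero_mul {T : Type} [CDIS T] (a : T) : CDIS.mul CDIS.zero a = CDIS.zero := by
  rw [CDIS.mul_comm]; exact CDIS.mul_zero a

theorem one_mul {T : Type} [CDIS T] (a : T) : CDIS.mul CDIS.one a = a := by
  rw [CDIS.mul_comm]; exact CDIS.mul_one a

theorem zero_add {T : Type} [CDIS T] (a : T) : CDIS.add CDIS.zero a = a := by
  rw [CDIS.add_comm]; exact CDIS.add_zero a

theorem hom_id {S : Type} [CDIS S] : CDIS.IsHom (id : S → S) :=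
  ⟨fun _ _ => rfl, fun _ _ => rfl, rfl, rfl⟩

theorem hom_comp {S T U : Type} [CDIS S] [CDIS T] [CDIS U] {f : S → T} {g : T → U}
    (hf : CDIS.IsHom f) (hg : CDIS.IsHom g) : CDIS.IsHom (g ∘ f) := by
  obtain ⟨fm, fa, f0, f1⟩ := hf
  obtain ⟨gm, ga, g0, g1⟩ := hg
  exact ⟨fun a b => by simp [Function.comp, fm, gm],
    fun a b => by simp [Function.comp, fa, ga],
    by simp [Function.comp, f0, g0],
    by simp [Function.comp, f1, g1]⟩

theorem card_eq_of_free {X F G : Type} [CDIS F] [CDIS G] (ι : X → F) (κ : X → G)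
    (hF : CDIS.IsFree X F ι) (hG : CDIS.IsFree X G κ) : Nat.card F = Nat.card G := by
  obtain ⟨f, ⟨hf, hfι⟩, -⟩ := hF G inferInstance κ
  obtain ⟨h, ⟨hh, hhκ⟩, -⟩ := hG F inferInstance ι
  obtain ⟨e, -, hu⟩ := hF F inferInstance ι
  have h1 : h ∘ f = e := hu _ ⟨hom_comp hf hh, by
    rw [Function.comp_assoc, hfι, hhκ]⟩
  have h2 : (id : F → F) = e := hu _ ⟨hom_id, by simp⟩
  obtain ⟨e', -, hu'⟩ := hG G inferInstance κ
  have h3 : f ∘ h = e' := hu' _ ⟨hom_comp hh hf, by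
    rw [Function.comp_assoc, hhκ, hfι]⟩
  have h4 : (id : G → G) = e' := hu' _ ⟨hom_id, by simp⟩
  have hfb : Function.Bijective f := by
    refine ⟨Function.LeftInverse.injective (g := h) ?_,
      Function.RightInverse.surjective (g := h) ?_⟩
    · intro x; exact congrFun (h1.trans h2.symm) x
    · intro x; exact congrFun (h3.trans h4.symm) x
  exact Nat.card_eq_of_bijective f hfb

instance boolCDIS : CDIS Bool where
  mul := fun a b => a && b
  add := fun a b => a || b
  zero := false
  one := true
  mul_assoc := by decide
  mul_comm := by decide
  mul_idem := by decide
  mul_one := by decide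
  add_assoc := by decide
  add_comm := by decide
  add_idem := by decide
  add_zero := by decide
  mul_add := by decide
  mul_zero := by decide

theorem bool_free : CDIS.IsFree Empty Bool (fun e => e.elim) := by
  intro T _ g
  refine ⟨fun b => if b then CDIS.one else CDIS.zero,
    ⟨⟨?_, ?_, ?_, ?_⟩, funext fun e => e.elim⟩, ?_⟩
  · rintro (_|_) (_|_)
    · exact (CDIS.mul_zero (CDIS.zero : T)).symm
    · exact (zero_mul (CDIS.one : T)).symm
    · exact (CDIS.mul_zero (CDIS.one : T)).symm
    · exact (CDIS.mul_one (CDIS.one : T)).symm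
  · rintro (_|_) (_|_)
    · exact (CDIS.add_zero (CDIS.zero : T)).symm
    · exact (zero_add (CDIS.one : T)).symm
    · exact (CDIS.add_zero (CDIS.one : T)).symm
    · exact (CDIS.add_idem (CDIS.one : T)).symm
  · rfl
  · rfl
  · rintro f' ⟨⟨-, -, h0, h1⟩, -⟩
    funext b
    cases b
    · exact h0
    · exact h1

inductive F1 : Type
  | z | o | g | go
  deriving DecidableEq

instance : Fintype F1 :=
  ⟨{.z, .o, .g, .go}, fun x => by cases x <;> simp⟩

def F1.mul : F1 → F1 → F1
  | .z, _ => .z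
  | _, .z => .z
  | .o, a => a
  | a, .o => a
  | .g, .g => .g
  | .g, .go => .g
  | .go, .g => .g
  | .go, .go => .go

def F1.add : F1 → F1 → F1
  | .z, a => a
  | a, .z => a
  | .o, .o => .o
  | .o, .g => .go
  | .g, .o => .go
  | .o, .go => .go
  | .go, .o => .go
  | .g, .g => .g
  | .g, .go => .go
  | .go, .g => .go
  | .go, .go => .go

instance f1CDIS : CDIS F1 where
  mul := F1.mul
  add := F1.add
  zero := .z
  one := .o
  mul_assoc := by decide
  mul_comm := by decide
  mul_idem := by decide
  mul_one := by decide
  add_assoc := by decide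
  add_comm := by decide
  add_idem := by decide
  add_zero := by decide
  mul_add := by decide
  mul_zero := by decide

theorem f1_free : CDIS.IsFree PUnit F1 (fun _ => F1.g) := by
  intro T _ gmap
  refine ⟨fun a => match a with
      | .z => CDIS.zero
      | .o => CDIS.one
      | .g => gmap PUnit.unit
      | .go => CDIS.add (gmap PUnit.unit) CDIS.one,
    ⟨⟨?_, ?_, ?_, ?_⟩, funext fun u => rfl⟩, ?_⟩
  · rintro (_|_|_|_) (_|_|_|_)
    · exact (CDIS.mul_zero _).symm
    · exact (zero_mul _).symm
    · exact (zero_mul _).symm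
    · exact (zero_mul _).symm
    · exact (CDIS.mul_zero _).symm
    · exact (CDIS.mul_one _).symm
    · exact (one_mul _).symm
    · exact (one_mul _).symm
    · exact (CDIS.mul_zero _).symm
    · exact (CDIS.mul_one _).symm
    · exact (CDIS.mul_idem _).symm
    · show gmap PUnit.unit = CDIS.mul (gmap PUnit.unit) (CDIS.add (gmap PUnit.unit) CDIS.one)
      rw [CDIS.mul_add, CDIS.mul_idem, CDIS.mul_one, CDIS.add_idem]
    · exact (CDIS.mul_zero _).symm
    · exact (CDIS.mul_one _).symm
    · show gmap PUnit.unit = CDIS.mul (CDIS.add (gmap PUnit.unit) CDIS.one) (gmap PUnit.unit)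
      rw [CDIS.mul_comm, CDIS.mul_add, CDIS.mul_idem, CDIS.mul_one, CDIS.add_idem]
    · exact (CDIS.mul_idem _).symm
  · rintro (_|_|_|_) (_|_|_|_)
    · exact (CDIS.add_zero _).symm
    · exact (zero_add _).symm
    · exact (zero_add _).symm
    · exact (zero_add _).symm
    · exact (CDIS.add_zero _).symm
    · exact (CDIS.add_idem _).symm
    · exact CDIS.add_comm _ _
    · show CDIS.add (gmap PUnit.unit) CDIS.one
        = CDIS.add CDIS.one (CDIS.add (gmap PUnit.unit) CDIS.one)
      rw [CDIS.add_comm CDIS.one (CDIS.add (gmap PUnit.unit) CDIS.one),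
        CDIS.add_assoc, CDIS.add_idem]
    · exact (CDIS.add_zero _).symm
    · rfl
    · exact (CDIS.add_idem _).symm
    · show CDIS.add (gmap PUnit.unit) CDIS.one
        = CDIS.add (gmap PUnit.unit) (CDIS.add (gmap PUnit.unit) CDIS.one)
      rw [← CDIS.add_assoc, CDIS.add_idem]
    · exact (CDIS.add_zero _).symm
    · show CDIS.add (gmap PUnit.unit) CDIS.one
        = CDIS.add (CDIS.add (gmap PUnit.unit) CDIS.one) CDIS.one
      rw [CDIS.add_assoc, CDIS.add_idem]
    · show CDIS.add (gmap PUnit.unit) CDIS.one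
        = CDIS.add (CDIS.add (gmap PUnit.unit) CDIS.one) (gmap PUnit.unit)
      rw [CDIS.add_comm (CDIS.add (gmap PUnit.unit) CDIS.one) (gmap PUnit.unit),
        ← CDIS.add_assoc, CDIS.add_idem]
    · exact (CDIS.add_idem _).symm
  · rfl
  · rfl
  · rintro f' ⟨⟨-, ha, h0, h1⟩, hι⟩
    have hg : f' F1.g = gmap PUnit.unit := congrFun hι PUnit.unit
    funext a
    cases a
    · exact h0
    · exact h1
    · exact hg
    · show f' F1.go = CDIS.add (gmap PUnit.unit) CDIS.one
      have h := ha F1.g F1.o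
      have h1' : f' F1.o = CDIS.one := h1
      rw [hg, h1'] at h
      exact h

end CDISAux

/-- the free commutative doubly idempotent semiring with
constants on no generators has 2 elements; on one generator, 4 elements. -/
theorem free_cdis_card_empty_and_one :
    (∀ (F : Type) (_ : CDIS F) (ι : Empty → F),
      CDIS.IsFree Empty F ι → Nat.card F = 2) ∧
    (∀ (F : Type) (_ : CDIS F) (ι : PUnit → F),
      CDIS.IsFree PUnit F ι → Nat.card F = 4) := by
  constructor
  · intro F _ ι hF
    rw [CDISAux.card_eq_of_free ι (fun e : Empty => e.elim) hF CDISAux.bool_free]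
    simp [Nat.card_eq_fintype_card]
  · intro F _ ι hF
    rw [CDISAux.card_eq_of_free ι (fun _ => CDISAux.F1.g) hF CDISAux.f1_free]
    simp [Nat.card_eq_fintype_card]
    rfl
end

section
/- The free commutative doubly idempotent semiring with constants 0 and 1 on a two-element generating set has exactly 14 elements. Equivalently, the free semilattice on two generators x, y has exactly 3 elements (x, y, xy) and exactly 7 subalgebras including the empty set (∅, {x}, {y}, {xy}, {x,xy}, {y,xy}, {x,y,xy}), and the free semiring has cardinality twice the number of these subalgebras. -/
/-- The free semilattice on two generators, realized as nonempty finite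
subsets of `Bool` under union. -/
def FreeSL2 : Type := {s : Finset Bool // s.Nonempty}

/-- The (union) semilattice operation on `FreeSL2`. -/
def FreeSL2.op (a b : FreeSL2) : FreeSL2 :=
  ⟨a.1 ∪ b.1, a.2.mono Finset.subset_union_left⟩

/-! ### Auxiliary development -/

section IdemSums
variable {α β R : Type*} [DecidableEq α] [DecidableEq β]

lemma idem_add_sum [AddCommMonoid R] (hia : ∀ a : R, a + a = a)
    (f : α → R) {s : Finset α} {b : α} (hb : b ∈ s) :
    f b + ∑ x ∈ s, f x = ∑ x ∈ s, f x := by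
  rw [← Finset.insert_erase hb, Finset.sum_insert (Finset.notMem_erase _ _),
    ← add_assoc, hia]

lemma idem_mul_prod [CommMonoid R] (him : ∀ a : R, a * a = a)
    (f : α → R) {s : Finset α} {b : α} (hb : b ∈ s) :
    f b * ∏ x ∈ s, f x = ∏ x ∈ s, f x := by
  rw [← Finset.insert_erase hb, Finset.prod_insert (Finset.notMem_erase _ _),
    ← mul_assoc, him]

lemma idem_sum_union [AddCommMonoid R] (hia : ∀ a : R, a + a = a)
    (f : α → R) (s t : Finset α) :
    ∑ x ∈ s ∪ t, f x = (∑ x ∈ s, f x) + ∑ x ∈ t, f x := by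
  induction s using Finset.induction with
  | empty => simp
  | @insert a s ha ih =>
    rw [Finset.insert_union, Finset.sum_insert ha, add_assoc, ← ih]
    by_cases h : a ∈ s ∪ t
    · rw [Finset.insert_eq_self.2 h]
      exact (idem_add_sum hia f h).symm
    · rw [Finset.sum_insert h]

lemma idem_prod_union [CommMonoid R] (him : ∀ a : R, a * a = a)
    (f : α → R) (s t : Finset α) :
    ∏ x ∈ s ∪ t, f x = (∏ x ∈ s, f x) * ∏ x ∈ t, f x := by
  induction s using Finset.induction with
  | empty => simp
  | @insert a s ha ih =>
    rw [Finset.insert_union, Finset.prod_insert ha, mul_assoc, ← ih]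
    by_cases h : a ∈ s ∪ t
    · rw [Finset.insert_eq_self.2 h]
      exact (idem_mul_prod him f h).symm
    · rw [Finset.prod_insert h]

lemma idem_sum_image [AddCommMonoid R] (hia : ∀ a : R, a + a = a)
    (φ : α → β) (f : β → R) (s : Finset α) :
    ∑ y ∈ s.image φ, f y = ∑ x ∈ s, f (φ x) := by
  induction s using Finset.induction with
  | empty => simp
  | @insert a s ha ih =>
    rw [Finset.image_insert, Finset.sum_insert ha]
    by_cases h : φ a ∈ s.image φ
    · rw [Finset.insert_eq_self.2 h, ih]
      obtain ⟨b, hb, hba⟩ := Finset.mem_image.1 h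
      have h1 := idem_add_sum hia (fun x => f (φ x)) hb
      rw [hba] at h1
      exact h1.symm
    · rw [Finset.sum_insert h, ih]

lemma idem_absorb [CommSemiring R] (hia : ∀ a : R, a + a = a)
    (him : ∀ a : R, a * a = a) (f : α → R) {s : Finset α} {u v : α}
    (hu : u ∈ s) (hv : v ∈ s) :
    f u * f v + ∑ x ∈ s, f x = ∑ x ∈ s, f x := by
  have hD : ∑ x ∈ s, f x = ∑ p ∈ s, ∑ q ∈ s, f p * f q := by
    rw [← Finset.sum_mul_sum, him]
  have h1 : f u * f v + ∑ q ∈ s, f u * f q = ∑ q ∈ s, f u * f q :=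
    idem_add_sum hia (fun q => f u * f q) hv
  have h2 : (∑ q ∈ s, f u * f q) + ∑ p ∈ s, ∑ q ∈ s, f p * f q
      = ∑ p ∈ s, ∑ q ∈ s, f p * f q :=
    idem_add_sum hia (fun p => ∑ q ∈ s, f p * f q) hu
  calc f u * f v + ∑ x ∈ s, f x
      = f u * f v + ((∑ q ∈ s, f u * f q) + ∑ p ∈ s, ∑ q ∈ s, f p * f q) := by
        rw [h2, ← hD]
    _ = (f u * f v + ∑ q ∈ s, f u * f q) + ∑ p ∈ s, ∑ q ∈ s, f p * f q := by
        rw [add_assoc]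
    _ = (∑ q ∈ s, f u * f q) + ∑ p ∈ s, ∑ q ∈ s, f p * f q := by rw [h1]
    _ = ∑ x ∈ s, f x := by rw [h2, ← hD]

end IdemSums

/-! ### The 14-element model -/

instance : DecidableEq FreeSL2 := inferInstanceAs (DecidableEq {s : Finset Bool // s.Nonempty})
instance : Fintype FreeSL2 := inferInstanceAs (Fintype {s : Finset Bool // s.Nonempty})

def MClosed (C : Finset FreeSL2) : Prop := ∀ a ∈ C, ∀ b ∈ C, FreeSL2.op a b ∈ C

instance : DecidablePred MClosed := fun C => by unfold MClosed; infer_instance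

def mT : FreeSL2 := ⟨{true}, by decide⟩
def mF : FreeSL2 := ⟨{false}, by decide⟩
def mTF : FreeSL2 := ⟨{true, false}, by decide⟩

def cl (C : Finset FreeSL2) : Finset FreeSL2 :=
  if mT ∈ C ∧ mF ∈ C then insert mTF C else C

lemma cl_closed : ∀ C, MClosed (cl C) := by decide

def MM : Type := Bool × {C : Finset FreeSL2 // MClosed C}

instance : DecidableEq MM := inferInstanceAs (DecidableEq (Bool × {C : Finset FreeSL2 // MClosed C}))
instance : Fintype MM := inferInstanceAs (Fintype (Bool × {C : Finset FreeSL2 // MClosed C}))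

def MM.add (a b : MM) : MM := (a.1 || b.1, ⟨cl (a.2.1 ∪ b.2.1), cl_closed _⟩)
def MM.mul (a b : MM) : MM :=
  (a.1 && b.1, ⟨cl (Finset.image₂ FreeSL2.op a.2.1 b.2.1 ∪
      (if a.1 then b.2.1 else ∅) ∪ (if b.1 then a.2.1 else ∅)), cl_closed _⟩)
def MM.zero : MM := (false, ⟨∅, by decide⟩)
def MM.one : MM := (true, ⟨∅, by decide⟩)

lemma MM.mul_assoc' : ∀ a b c : MM, (a.mul b).mul c = a.mul (b.mul c) := by decide
lemma MM.mul_comm' : ∀ a b : MM, a.mul b = b.mul a := by decide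
lemma MM.mul_idem' : ∀ a : MM, a.mul a = a := by decide
lemma MM.mul_one' : ∀ a : MM, a.mul MM.one = a := by decide
lemma MM.add_assoc' : ∀ a b c : MM, (a.add b).add c = a.add (b.add c) := by decide
lemma MM.add_comm' : ∀ a b : MM, a.add b = b.add a := by decide
lemma MM.add_idem' : ∀ a : MM, a.add a = a := by decide
lemma MM.add_zero' : ∀ a : MM, a.add MM.zero = a := by decide
lemma MM.mul_add' : ∀ a b c : MM, a.mul (b.add c) = (a.mul b).add (a.mul c) := by decide
lemma MM.mul_zero' : ∀ a : MM, a.mul MM.zero = MM.zero := by decide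

instance instCDISMM : CDIS MM where
  mul := MM.mul
  add := MM.add
  zero := MM.zero
  one := MM.one
  mul_assoc := MM.mul_assoc'
  mul_comm := MM.mul_comm'
  mul_idem := MM.mul_idem'
  mul_one := MM.mul_one'
  add_assoc := MM.add_assoc'
  add_comm := MM.add_comm'
  add_idem := MM.add_idem'
  add_zero := MM.add_zero'
  mul_add := MM.mul_add'
  mul_zero := MM.mul_zero'

lemma singleton_closed : ∀ x : FreeSL2, MClosed {x} := by decide

def ιM : Bool → MM := fun b => (false, ⟨{⟨{b}, Finset.singleton_nonempty b⟩}, singleton_closed _⟩)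

/-- A commutative semiring structure from a `CDIS` structure. -/
def acmOfCDIS (T : Type) (h : CDIS T) : AddCommMonoid T where
  add := CDIS.add
  zero := CDIS.zero
  add_assoc := CDIS.add_assoc
  add_comm := CDIS.add_comm
  zero_add := fun a => (CDIS.add_comm CDIS.zero a).trans (CDIS.add_zero a)
  add_zero := CDIS.add_zero
  nsmul := @nsmulRec T ⟨CDIS.zero⟩ ⟨CDIS.add⟩

def csOfCDIS (T : Type) (h : CDIS T) : CommSemiring T :=
  { acmOfCDIS T h with
    mul := CDIS.mul
    one := CDIS.one
    mul_assoc := CDIS.mul_assoc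
    mul_comm := CDIS.mul_comm
    one_mul := fun a => (CDIS.mul_comm CDIS.one a).trans (CDIS.mul_one a)
    mul_one := CDIS.mul_one
    left_distrib := CDIS.mul_add
    right_distrib := fun a b c => by
      show CDIS.mul (CDIS.add a b) c = CDIS.add (CDIS.mul a c) (CDIS.mul b c)
      rw [CDIS.mul_comm, CDIS.mul_add, CDIS.mul_comm c a, CDIS.mul_comm c b]
    zero_mul := fun a => (CDIS.mul_comm CDIS.zero a).trans (CDIS.mul_zero a)
    mul_zero := CDIS.mul_zero
    npow := @npowRec T ⟨CDIS.one⟩ ⟨CDIS.mul⟩ }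

section Eval
variable {T : Type} [CommSemiring T]

/-- Evaluation of a monomial. -/
def mono (g : Bool → T) (c : FreeSL2) : T := ∏ b ∈ c.1, g b

lemma mono_op (him : ∀ a : T, a * a = a) (g : Bool → T) (a b : FreeSL2) :
    mono g (FreeSL2.op a b) = mono g a * mono g b :=
  idem_prod_union him g a.1 b.1

/-- The candidate homomorphism `MM → T`. -/
def fhat (g : Bool → T) (m : MM) : T :=
  (if m.1 then 1 else 0) + ∑ c ∈ m.2.1, mono g c

lemma sum_cl (hia : ∀ a : T, a + a = a) (him : ∀ a : T, a * a = a)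
    (g : Bool → T) (X : Finset FreeSL2) :
    ∑ c ∈ cl X, mono g c = ∑ c ∈ X, mono g c := by
  unfold cl
  split_ifs with h
  · by_cases hTF : mTF ∈ X
    · rw [Finset.insert_eq_self.2 hTF]
    · rw [Finset.sum_insert hTF]
      have h1 : mono g mTF = mono g mT * mono g mF := by
        have : FreeSL2.op mT mF = mTF := by decide
        rw [← this, mono_op him]
      rw [h1]
      exact idem_absorb hia him (mono g) h.1 h.2
  · rfl

lemma fhat_add (hia : ∀ a : T, a + a = a) (him : ∀ a : T, a * a = a)
    (g : Bool → T) (a b : MM) :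
    fhat g (MM.add a b) = fhat g a + fhat g b := by
  obtain ⟨e, C, hC⟩ := a
  obtain ⟨f, D, hD⟩ := b
  show (if (e || f) then (1:T) else 0) + ∑ c ∈ cl (C ∪ D), mono g c = _
  rw [sum_cl hia him, idem_sum_union hia]
  have hδ : (if (e || f) then (1:T) else 0)
      = (if e then (1:T) else 0) + (if f then (1:T) else 0) := by
    cases e <;> cases f <;> simp [hia 1]
  rw [hδ, add_add_add_comm]
  rfl

lemma fhat_mul (hia : ∀ a : T, a + a = a) (him : ∀ a : T, a * a = a)
    (g : Bool → T) (a b : MM) :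
    fhat g (MM.mul a b) = fhat g a * fhat g b := by
  obtain ⟨e, C, hC⟩ := a
  obtain ⟨f, D, hD⟩ := b
  show (if (e && f) then (1:T) else 0) +
      ∑ c ∈ cl (Finset.image₂ FreeSL2.op C D ∪ (if e then D else ∅) ∪
        (if f then C else ∅)), mono g c = _
  rw [sum_cl hia him, idem_sum_union hia, idem_sum_union hia]
  have himg : ∑ c ∈ Finset.image₂ FreeSL2.op C D, mono g c
      = (∑ c ∈ C, mono g c) * ∑ c ∈ D, mono g c := by
    rw [← Finset.image_uncurry_product, idem_sum_image hia, Finset.sum_product,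
      Finset.sum_mul_sum]
    exact Finset.sum_congr rfl fun p _ => Finset.sum_congr rfl fun q _ =>
      mono_op him g p q
  rw [himg]
  show _ = ((if e then (1:T) else 0) + ∑ c ∈ C, mono g c) *
      ((if f then (1:T) else 0) + ∑ c ∈ D, mono g c)
  cases e <;> cases f <;> simp <;> ring

lemma fhat_zero (g : Bool → T) : fhat g MM.zero = 0 := by simp [fhat, MM.zero]

lemma fhat_one (g : Bool → T) : fhat g MM.one = 1 := by simp [fhat, MM.one]

lemma fhat_gen (g : Bool → T) (b : Bool) : fhat g (ιM b) = g b := by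
  simp [fhat, ιM, mono]
  exact Finset.sum_singleton (fun c : FreeSL2 => ∏ b ∈ c.1, g b) _ |>.trans (by simp)

end Eval

/-- Every element of `MM` is one of the 14 explicit elements. -/
lemma MM_enum : ∀ m : MM,
    m = CDIS.zero ∨ m = CDIS.one ∨
    m = ιM true ∨ m = ιM false ∨
    m = CDIS.mul (ιM true) (ιM false) ∨
    m = CDIS.add (ιM true) (CDIS.mul (ιM true) (ιM false)) ∨
    m = CDIS.add (ιM false) (CDIS.mul (ιM true) (ιM false)) ∨
    m = CDIS.add (ιM true) (ιM false) ∨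
    m = CDIS.add CDIS.one (ιM true) ∨
    m = CDIS.add CDIS.one (ιM false) ∨
    m = CDIS.add CDIS.one (CDIS.mul (ιM true) (ιM false)) ∨
    m = CDIS.add CDIS.one (CDIS.add (ιM true) (CDIS.mul (ιM true) (ιM false))) ∨
    m = CDIS.add CDIS.one (CDIS.add (ιM false) (CDIS.mul (ιM true) (ιM false))) ∨
    m = CDIS.add CDIS.one (CDIS.add (ιM true) (ιM false)) := by
  decide

/-- Generation principle for `MM`. -/
lemma MM_induction (p : MM → Prop) (h0 : p CDIS.zero) (h1 : p CDIS.one)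
    (hx : p (ιM true)) (hy : p (ιM false))
    (hadd : ∀ a b, p a → p b → p (CDIS.add a b))
    (hmul : ∀ a b, p a → p b → p (CDIS.mul a b)) : ∀ m, p m := by
  intro m
  rcases MM_enum m with rfl|rfl|rfl|rfl|rfl|rfl|rfl|rfl|rfl|rfl|rfl|rfl|rfl|rfl
  · exact h0
  · exact h1
  · exact hx
  · exact hy
  · exact hmul _ _ hx hy
  · exact hadd _ _ hx (hmul _ _ hx hy)
  · exact hadd _ _ hy (hmul _ _ hx hy)
  · exact hadd _ _ hx hy
  · exact hadd _ _ h1 hx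
  · exact hadd _ _ h1 hy
  · exact hadd _ _ h1 (hmul _ _ hx hy)
  · exact hadd _ _ h1 (hadd _ _ hx (hmul _ _ hx hy))
  · exact hadd _ _ h1 (hadd _ _ hy (hmul _ _ hx hy))
  · exact hadd _ _ h1 (hadd _ _ hx hy)

/-- `MM` is the free CDIS on two generators. -/
lemma MM_free : CDIS.IsFree Bool MM ιM := by
  intro T instT g
  letI : CommSemiring T := csOfCDIS T instT
  have hia : ∀ a : T, a + a = a := instT.add_idem
  have him : ∀ a : T, a * a = a := instT.mul_idem
  refine ⟨fhat g, ⟨⟨fhat_mul hia him g, fhat_add hia him g, fhat_zero g, fhat_one g⟩,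
    funext (fhat_gen g)⟩, ?_⟩
  rintro f' ⟨⟨hm, ha, h0, h1⟩, hgen⟩
  funext m
  refine MM_induction (fun m => f' m = fhat g m) ?_ ?_ ?_ ?_ ?_ ?_ m
  · show f' CDIS.zero = fhat g CDIS.zero
    rw [h0, show (CDIS.zero : MM) = MM.zero from rfl, fhat_zero]
    exact rfl
  · show f' CDIS.one = fhat g CDIS.one
    rw [h1, show (CDIS.one : MM) = MM.one from rfl, fhat_one]
    exact rfl
  · show f' (ιM true) = fhat g (ιM true)
    rw [fhat_gen]
    exact congrFun hgen true
  · show f' (ιM false) = fhat g (ιM false)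
    rw [fhat_gen]
    exact congrFun hgen false
  · intro a b pa pb
    show f' (CDIS.add a b) = fhat g (CDIS.add a b)
    rw [ha, pa, pb]
    exact (fhat_add hia him g a b).symm
  · intro a b pa pb
    show f' (CDIS.mul a b) = fhat g (CDIS.mul a b)
    rw [hm, pa, pb]
    exact (fhat_mul hia him g a b).symm

lemma hom_comp {S T U : Type} [CDIS S] [CDIS T] [CDIS U] {f : S → T} {g : T → U}
    (hf : CDIS.IsHom f) (hg : CDIS.IsHom g) : CDIS.IsHom (g ∘ f) := by
  obtain ⟨hfm, hfa, hf0, hf1⟩ := hf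
  obtain ⟨hgm, hga, hg0, hg1⟩ := hg
  exact ⟨fun a b => by simp [Function.comp, hfm, hgm],
    fun a b => by simp [Function.comp, hfa, hga],
    by simp [Function.comp, hf0, hg0],
    by simp [Function.comp, hf1, hg1]⟩

lemma hom_id {S : Type} [CDIS S] : CDIS.IsHom (id : S → S) :=
  ⟨fun _ _ => rfl, fun _ _ => rfl, rfl, rfl⟩

/-- The subalgebra set/finset equivalence. -/
noncomputable def setEquiv :
    {C : Set FreeSL2 // ∀ a ∈ C, ∀ b ∈ C, FreeSL2.op a b ∈ C} ≃
    {C : Finset FreeSL2 // MClosed C} where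
  toFun C := ⟨(C.1.toFinite).toFinset, by
    intro a ha b hb
    rw [Set.Finite.mem_toFinset] at *
    exact C.2 a ha b hb⟩
  invFun C := ⟨(C.1 : Set FreeSL2), by
    intro a ha b hb
    exact C.2 a (by simpa using ha) b (by simpa using hb)⟩
  left_inv C := Subtype.ext (Set.Finite.coe_toFinset _)
  right_inv C := Subtype.ext (by ext a; simp)

/-- the free commutative doubly idempotent semiring with
constants on two generators has 14 elements; equivalently, the free
semilattice on two generators has 3 elements and 7 subalgebras (including
the empty one), and the free semiring has twice as many elements. -/
theorem free_cdis_card_two :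
    Nat.card FreeSL2 = 3 ∧
    Nat.card {C : Set FreeSL2 // ∀ a ∈ C, ∀ b ∈ C, FreeSL2.op a b ∈ C} = 7 ∧
    (∀ (F : Type) (_ : CDIS F) (ι : Bool → F),
      CDIS.IsFree Bool F ι →
        Nat.card F = 14 ∧
        Nat.card F =
          2 * Nat.card {C : Set FreeSL2 // ∀ a ∈ C, ∀ b ∈ C, FreeSL2.op a b ∈ C}) := by
  have hsub : Nat.card {C : Set FreeSL2 // ∀ a ∈ C, ∀ b ∈ C, FreeSL2.op a b ∈ C} = 7 := by
    rw [Nat.card_congr setEquiv, Nat.card_eq_fintype_card]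
    decide
  refine ⟨by rw [Nat.card_eq_fintype_card]; decide, hsub, ?_⟩
  intro F instF ι hfree
  obtain ⟨u, ⟨hu, huι⟩, _⟩ := hfree MM instCDISMM ιM
  obtain ⟨v, ⟨hv, hvι⟩, _⟩ := MM_free F instF ι
  obtain ⟨w, _, hwuniq⟩ := hfree F instF ι
  obtain ⟨w2, _, hw2uniq⟩ := MM_free MM instCDISMM ιM
  have h1 : v ∘ u = id := by
    rw [hwuniq (v ∘ u) ⟨hom_comp hu hv, by
      rw [Function.comp_assoc, huι, hvι]⟩,
      hwuniq id ⟨hom_id, Function.id_comp ι⟩]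
  have h2 : u ∘ v = id := by
    rw [hw2uniq (u ∘ v) ⟨hom_comp hv hu, by
      rw [Function.comp_assoc, hvι, huι]⟩,
      hw2uniq id ⟨hom_id, Function.id_comp ιM⟩]
  have hcardM : Nat.card MM = 14 := by
    rw [Nat.card_eq_fintype_card]; decide
  have hFM : Nat.card F = Nat.card MM :=
    Nat.card_congr ⟨u, v, congrFun h1, congrFun h2⟩
  constructor
  · rw [hFM, hcardM]
  · rw [hFM, hcardM, hsub]
end

section
/- Let S be the set of sub(semi)lattices (subalgebras) of a semilattice (M,·), including the empty set, with operations ⟨A⟩·⟨B⟩ := ⟨A·B⟩ (where A·B is the complex product) and ⟨A⟩+⟨B⟩ := ⟨A ∪ B⟩ (the subalgebra generated by the union). Then (S, ·, +, ∅) is a 0-semilattice ordered semilattice: + is a join-semilattice operation with least element ∅, · is associative, commutative, and idempotent on S, · distributes over +, and C·∅ = ∅ for all C ∈ S. -/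
section
variable {M : Type*} [CommSemigroup M]

/-- The subsemilattice generated by a subset `A` of a semilattice `M`. -/
inductive SLgen (A : Set M) : M → Prop
  | base : ∀ a ∈ A, SLgen A a
  | mul : ∀ a b, SLgen A a → SLgen A b → SLgen A (a * b)

/-- The subsemilattice generated by `A`, as a set. -/
def genSet (A : Set M) : Set M := {x | SLgen A x}

/-- A subalgebra (sub-semilattice) of `M`; the empty set qualifies. -/
def IsSubSL (C : Set M) : Prop := ∀ a ∈ C, ∀ b ∈ C, a * b ∈ C

/-- Product of subalgebras: `⟨A⟩·⟨B⟩ := ⟨A·B⟩`. -/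
def subMul (C D : Set M) : Set M := genSet (Set.image2 (· * ·) C D)

/-- Join of subalgebras: `⟨A⟩+⟨B⟩ := ⟨A ∪ B⟩`. -/
def subAdd (C D : Set M) : Set M := genSet (C ∪ D)

lemma gen_isSub (A : Set M) : IsSubSL (genSet A) :=
  fun a ha b hb => SLgen.mul a b ha hb

lemma subset_gen (A : Set M) : A ⊆ genSet A := fun a ha => SLgen.base a ha

lemma gen_least {A C : Set M} (hAC : A ⊆ C) (hC : IsSubSL C) : genSet A ⊆ C := by
  intro x hx
  induction hx with
  | base a ha => exact hAC ha
  | mul a b _ _ iha ihb => exact hC a iha b ihb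

lemma gen_mono {A B : Set M} (h : A ⊆ B) : genSet A ⊆ genSet B :=
  gen_least (h.trans (subset_gen B)) (gen_isSub B)

lemma gen_of_sub {C : Set M} (hC : IsSubSL C) : genSet C = C :=
  Set.Subset.antisymm (gen_least subset_rfl hC) (subset_gen C)

lemma gen_union_gen_left (A B : Set M) : genSet (genSet A ∪ B) = genSet (A ∪ B) := by
  refine Set.Subset.antisymm (gen_least ?_ (gen_isSub _))
    (gen_mono (Set.union_subset_union_left B (subset_gen A)))
  exact Set.union_subset (gen_mono Set.subset_union_left)
    ((Set.subset_union_right).trans (subset_gen _))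

lemma gen_union_gen_right (A B : Set M) : genSet (A ∪ genSet B) = genSet (A ∪ B) := by
  rw [Set.union_comm, gen_union_gen_left, Set.union_comm]

lemma gen_union_gen (A B : Set M) : genSet (genSet A ∪ genSet B) = genSet (A ∪ B) := by
  refine Set.Subset.antisymm (gen_least ?_ (gen_isSub _))
    (gen_mono (Set.union_subset_union (subset_gen A) (subset_gen B)))
  exact Set.union_subset (gen_mono Set.subset_union_left)
    (gen_mono Set.subset_union_right)

lemma gen_empty : genSet (∅ : Set M) = ∅ := by
  ext x; simp only [genSet, Set.mem_setOf_eq, Set.mem_empty_iff_false, iff_false]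
  intro h; induction h with
  | base a ha => exact ha
  | mul a b _ _ iha ihb => exact iha

lemma mul_mem_gen_left (hidem : ∀ x : M, x * x = x) {A B : Set M} {x y : M}
    (hx : x ∈ genSet A) (hy : y ∈ B) :
    x * y ∈ genSet (Set.image2 (· * ·) A B) := by
  induction hx with
  | base a ha => exact subset_gen _ (Set.mem_image2_of_mem ha hy)
  | mul a b _ _ iha ihb =>
    have : (a * y) * (b * y) = (a * b) * y := by
      rw [mul_assoc, mul_comm y (b * y), mul_assoc b y y, hidem y, ← mul_assoc]
    exact this ▸ SLgen.mul _ _ iha ihb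

lemma image2_comm' (A B : Set M) :
    Set.image2 (· * ·) A B = Set.image2 (· * ·) B A :=
  Set.image2_comm mul_comm

lemma gen_image2_gen_left (hidem : ∀ x : M, x * x = x) (A B : Set M) :
    genSet (Set.image2 (· * ·) (genSet A) B) = genSet (Set.image2 (· * ·) A B) := by
  refine Set.Subset.antisymm (gen_least ?_ (gen_isSub _))
    (gen_mono (Set.image2_subset_right (subset_gen A)))
  rintro _ ⟨x, hx, y, hy, rfl⟩
  exact mul_mem_gen_left hidem hx hy

lemma gen_image2_gen_right (hidem : ∀ x : M, x * x = x) (A B : Set M) :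
    genSet (Set.image2 (· * ·) A (genSet B)) = genSet (Set.image2 (· * ·) A B) := by
  rw [image2_comm' A, gen_image2_gen_left hidem, image2_comm']

/-- the set of subalgebras of a semilattice `(M,·)`, including
`∅`, with `⟨A⟩·⟨B⟩ = ⟨A·B⟩` and `⟨A⟩+⟨B⟩ = ⟨A ∪ B⟩`, is a 0-semilattice
ordered semilattice with least element `∅`. -/
theorem subalgebras_zero_slo_semilattice
    (hidem : ∀ x : M, x * x = x) :
    ∀ C D E : Set M, IsSubSL C → IsSubSL D → IsSubSL E →
      IsSubSL (subAdd C D) ∧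
      IsSubSL (subMul C D) ∧
      subAdd (subAdd C D) E = subAdd C (subAdd D E) ∧
      subAdd C D = subAdd D C ∧
      subAdd C C = C ∧
      subAdd C (∅ : Set M) = C ∧
      subMul (subMul C D) E = subMul C (subMul D E) ∧
      subMul C D = subMul D C ∧
      subMul C C = C ∧
      subMul C (subAdd D E) = subAdd (subMul C D) (subMul C E) ∧
      subMul C (∅ : Set M) = ∅ := by
  intro C D E hC hD hE
  refine ⟨gen_isSub _, gen_isSub _, ?_, ?_, ?_, ?_, ?_, ?_, ?_, ?_, ?_⟩
  · -- add assoc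
    show genSet (genSet (C ∪ D) ∪ E) = genSet (C ∪ genSet (D ∪ E))
    rw [gen_union_gen_left, gen_union_gen_right, Set.union_assoc]
  · show genSet (C ∪ D) = genSet (D ∪ C); rw [Set.union_comm]
  · show genSet (C ∪ C) = C; rw [Set.union_self, gen_of_sub hC]
  · show genSet (C ∪ ∅) = C; rw [Set.union_empty, gen_of_sub hC]
  · -- mul assoc
    show subMul (subMul C D) E = subMul C (subMul D E)
    unfold subMul
    rw [gen_image2_gen_left hidem, gen_image2_gen_right hidem,
      Set.image2_assoc mul_assoc]
  · show genSet _ = genSet _; rw [image2_comm']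
  · show genSet (Set.image2 (· * ·) C C) = C
    refine Set.Subset.antisymm (gen_least ?_ hC) (fun c hc => ?_)
    · rintro _ ⟨a, ha, b, hb, rfl⟩; exact hC a ha b hb
    · have h : c * c ∈ Set.image2 (· * ·) C C := Set.mem_image2_of_mem hc hc
      rw [hidem c] at h
      exact subset_gen _ h
  · -- distributivity
    show subMul C (subAdd D E) = subAdd (subMul C D) (subMul C E)
    unfold subMul subAdd
    rw [gen_image2_gen_right hidem, Set.image2_union_right, gen_union_gen]
  · show genSet (Set.image2 (· * ·) C ∅) = ∅
    rw [Set.image2_empty_right, gen_empty]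

end
end
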